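/- Let f : ℝᵈ → ℝ be C², μ-strongly-convex and L-smooth, with gradient flow trajectory y(t) having gradients bounded by ℓ. For any 0 < h ≤ 1/L, the sampled flow yₖ = y(kh) is ε-shadowed by the gradient descent orbit started at x₀ = y₀, with shadowing radius ε = hℓL/(2μ). -/

import Mathlib

open InnerProductSpace
noncomputable def dualInv (d : ℕ) :
    StrongDual ℝ (EuclideanSpace ℝ (Fin d)) →L[ℝ] EuclideanSpace ℝ (Fin d) where
  toFun := (toDual ℝ (EuclideanSpace ℝ (Fin d))).symm
  map_add' := by simp
  map_smul' := fun r w => by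
    simp [LinearIsometryEquiv.map_smulₛₗ]
  cont := (toDual ℝ (EuclideanSpace ℝ (Fin d))).symm.continuous

lemma grad_eq_dualInv {d : ℕ} (f : EuclideanSpace ℝ (Fin d) → ℝ) :
    gradient f = fun x => dualInv d (fderiv ℝ f x) := rfl

lemma inner_dualInv {d : ℕ} (w : StrongDual ℝ (EuclideanSpace ℝ (Fin d)))
    (v : EuclideanSpace ℝ (Fin d)) : (inner ℝ (dualInv d w) v : ℝ) = w v :=
  toDual_symm_apply

lemma contDiff_grad {d : ℕ} {f : EuclideanSpace ℝ (Fin d) → ℝ} (hf : ContDiff ℝ 2 f) :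
    ContDiff ℝ 1 (gradient f) := by
  rw [grad_eq_dualInv]
  exact (dualInv d).contDiff.comp (hf.fderiv_right (by norm_num))

lemma fderiv_grad_eq {d : ℕ} {f : EuclideanSpace ℝ (Fin d) → ℝ} (hf : ContDiff ℝ 2 f)
    (a : EuclideanSpace ℝ (Fin d)) :
    fderiv ℝ (gradient f) a = (dualInv d).comp (fderiv ℝ (fderiv ℝ f) a) := by
  rw [grad_eq_dualInv]
  have hF : DifferentiableAt ℝ (fderiv ℝ f) a :=
    ((hf.fderiv_right (m := 1) (by norm_num)).differentiable one_ne_zero) a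
  exact ((dualInv d).hasFDerivAt.comp a hF.hasFDerivAt).fderiv

lemma symm_fderiv_grad {d : ℕ} {f : EuclideanSpace ℝ (Fin d) → ℝ} (hf : ContDiff ℝ 2 f)
    (a u v : EuclideanSpace ℝ (Fin d)) :
    (inner ℝ (fderiv ℝ (gradient f) a u) v : ℝ) = inner ℝ (fderiv ℝ (gradient f) a v) u := by
  rw [fderiv_grad_eq hf]
  simp only [ContinuousLinearMap.comp_apply, inner_dualInv]
  exact (hf.contDiffAt.isSymmSndFDerivAt (by simp)) u v


-- Cauchy–Schwarz for the PSD bilinear form ⟪u, A v⟫ - μ ⟪u, v⟫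
lemma cs_aux {d : ℕ} {A : EuclideanSpace ℝ (Fin d) →L[ℝ] EuclideanSpace ℝ (Fin d)} {μ : ℝ}
    (hsymm : ∀ u v, (inner ℝ (A u) v : ℝ) = inner ℝ (A v) u)
    (hμ : ∀ v, μ * ‖v‖ ^ 2 ≤ (inner ℝ v (A v) : ℝ))
    (u v : EuclideanSpace ℝ (Fin d)) :
    ((inner ℝ u (A v) : ℝ) - μ * inner ℝ u v) ^ 2 ≤
      ((inner ℝ u (A u) : ℝ) - μ * ‖u‖ ^ 2) * ((inner ℝ v (A v) : ℝ) - μ * ‖v‖ ^ 2) := by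
  have key : ∀ t : ℝ, 0 ≤ ((inner ℝ v (A v) : ℝ) - μ * ‖v‖ ^ 2) * (t * t) +
      (2 * ((inner ℝ u (A v) : ℝ) - μ * inner ℝ u v)) * t +
      ((inner ℝ u (A u) : ℝ) - μ * ‖u‖ ^ 2) := by
    intro t
    have h0 := hμ (u + t • v)
    have huv : (inner ℝ u (A v) : ℝ) = inner ℝ v (A u) := by
      calc (inner ℝ u (A v) : ℝ) = inner ℝ (A v) u := real_inner_comm _ _
        _ = inner ℝ (A u) v := (hsymm u v).symm
        _ = inner ℝ v (A u) := real_inner_comm _ _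
    have hn : ‖u + t • v‖ ^ 2 = ‖u‖ ^ 2 + 2 * t * inner ℝ u v + t ^ 2 * ‖v‖ ^ 2 := by
      rw [← real_inner_self_eq_norm_sq, ← real_inner_self_eq_norm_sq,
        ← real_inner_self_eq_norm_sq]
      simp [inner_add_add_self, inner_smul_left, inner_smul_right, real_inner_comm u v]
      rw [norm_add_sq_real, norm_smul, real_inner_smul_right, mul_pow, Real.norm_eq_abs, sq_abs]
      ring
    have hi : (inner ℝ (u + t • v) (A (u + t • v)) : ℝ) =
        inner ℝ u (A u) + 2 * t * inner ℝ u (A v) + t ^ 2 * inner ℝ v (A v) := by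
      simp [inner_add_left, inner_smul_left, inner_smul_right, map_add, map_smul,
        inner_add_right, huv]
      ring
    rw [hn, hi] at h0
    nlinarith [h0]
  have hd := discrim_le_zero key
  rw [discrim] at hd
  nlinarith [hd]

lemma contraction_aux {d : ℕ} {A : EuclideanSpace ℝ (Fin d) →L[ℝ] EuclideanSpace ℝ (Fin d)}
    {μ L h : ℝ}
    (hsymm : ∀ u v, (inner ℝ (A u) v : ℝ) = inner ℝ (A v) u)
    (hμ : ∀ v, μ * ‖v‖ ^ 2 ≤ (inner ℝ v (A v) : ℝ))
    (hLA : ‖A‖ ≤ L) (hμ0 : 0 < μ) (hh : 0 < h) (hhL : h * L ≤ 1) (hμL : μ ≤ L)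
    (v : EuclideanSpace ℝ (Fin d)) :
    ‖v - h • A v‖ ≤ (1 - h * μ) * ‖v‖ := by
  set w : EuclideanSpace ℝ (Fin d) := A v - μ • v with hw
  set q : ℝ := (inner ℝ v (A v) : ℝ) - μ * ‖v‖ ^ 2 with hq
  have hq0 : 0 ≤ q := by have := hμ v; linarith
  -- ‖w‖^2 ≤ (L - μ) * q
  have hwq : ‖w‖ ^ 2 ≤ (L - μ) * q := by
    have hbww : (inner ℝ w (A w) : ℝ) - μ * ‖w‖ ^ 2 ≤ (L - μ) * ‖w‖ ^ 2 := by
      have h1 : (inner ℝ w (A w) : ℝ) ≤ ‖w‖ * ‖A w‖ := real_inner_le_norm w (A w)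
      have h2 : ‖A w‖ ≤ ‖A‖ * ‖w‖ := A.le_opNorm w
      have h3 : ‖A‖ * ‖w‖ ≤ L * ‖w‖ := by
        exact mul_le_mul_of_nonneg_right hLA (norm_nonneg w)
      nlinarith [norm_nonneg w]
    have hcs := cs_aux hsymm hμ w v
    have hwv : (inner ℝ w (A v) : ℝ) - μ * inner ℝ w v = ‖w‖ ^ 2 := by
      have : (inner ℝ w (A v - μ • v) : ℝ) = inner ℝ w (A v) - μ * inner ℝ w v := by
        simp [inner_sub_right, inner_smul_right]
      rw [← this, ← hw, real_inner_self_eq_norm_sq]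
    rw [hwv] at hcs
    have hbww0 : 0 ≤ (inner ℝ w (A w) : ℝ) - μ * ‖w‖ ^ 2 := by have := hμ w; linarith
    rcases eq_or_lt_of_le (norm_nonneg w) with h0 | h0
    · have : ‖w‖ ^ 2 = 0 := by rw [← h0]; ring
      rw [this]; exact mul_nonneg (by linarith) hq0
    · have hw2 : 0 < ‖w‖ ^ 2 := by positivity
      nlinarith [hcs, hbww, hbww0, mul_le_mul_of_nonneg_right hbww hq0]
  -- expand ‖v - h • A v‖²
  have hAv : A v = w + μ • v := by rw [hw]; abel
  have hvw : (inner ℝ v w : ℝ) = q := by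
    rw [hw, hq, inner_sub_right, inner_smul_right, real_inner_self_eq_norm_sq]
  have hexp : ‖v - h • A v‖ ^ 2 =
      (1 - h * μ) ^ 2 * ‖v‖ ^ 2 - 2 * h * (1 - h * μ) * q + h ^ 2 * ‖w‖ ^ 2 := by
    have : v - h • A v = (1 - h * μ) • v - h • w := by
      rw [hAv]; module
    have h1 : ‖(1 - h * μ) • v‖ ^ 2 = (1 - h * μ) ^ 2 * ‖v‖ ^ 2 := by
      rw [norm_smul]; simp [mul_pow, sq_abs]
    have h2 : ‖h • w‖ ^ 2 = h ^ 2 * ‖w‖ ^ 2 := by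
      rw [norm_smul]; simp [mul_pow, sq_abs]
    have h3 : (inner ℝ ((1 - h * μ) • v) (h • w) : ℝ) = (1 - h * μ) * h * q := by
      rw [real_inner_smul_left, real_inner_smul_right, hvw]; ring
    rw [this, norm_sub_sq_real, h1, h2, h3]; ring
  have hcoef : h ^ 2 * (L - μ) - 2 * h * (1 - h * μ) ≤ 0 := by nlinarith
  have h1μ : 0 ≤ 1 - h * μ := by nlinarith
  have hsq : ‖v - h • A v‖ ^ 2 ≤ ((1 - h * μ) * ‖v‖) ^ 2 := by
    rw [hexp]
    nlinarith [mul_le_mul_of_nonneg_left hwq (sq_nonneg h), hq0, sq_nonneg (‖v‖)]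
  have hrhs : 0 ≤ (1 - h * μ) * ‖v‖ := mul_nonneg h1μ (norm_nonneg v)
  exact le_of_pow_le_pow_left₀ two_ne_zero hrhs hsq

lemma grad_lipschitz {d : ℕ} {f : EuclideanSpace ℝ (Fin d) → ℝ} {L : ℝ} (hf : ContDiff ℝ 2 f)
    (hL : ∀ a, ‖fderiv ℝ (gradient f) a‖ ≤ L) (a b : EuclideanSpace ℝ (Fin d)) :
    ‖gradient f a - gradient f b‖ ≤ L * ‖a - b‖ :=
  Convex.norm_image_sub_le_of_norm_fderiv_le
    (fun x _ => ((contDiff_grad hf).differentiable one_ne_zero) x)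
    (fun x _ => hL x) convex_univ (Set.mem_univ b) (Set.mem_univ a)

lemma gd_contract {d : ℕ} {f : EuclideanSpace ℝ (Fin d) → ℝ} {L μ h : ℝ} (hf : ContDiff ℝ 2 f)
    (hsc : ∀ a v, μ * ‖v‖ ^ 2 ≤ inner ℝ v (fderiv ℝ (gradient f) a v))
    (hLb : ∀ a, ‖fderiv ℝ (gradient f) a‖ ≤ L)
    (hμ0 : 0 < μ) (hh : 0 < h) (hhL : h * L ≤ 1) (hμL : μ ≤ L)
    (a b : EuclideanSpace ℝ (Fin d)) :
    ‖(a - h • gradient f a) - (b - h • gradient f b)‖ ≤ (1 - h * μ) * ‖a - b‖ := by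
  have hgd : Differentiable ℝ (gradient f) := (contDiff_grad hf).differentiable one_ne_zero
  set G : EuclideanSpace ℝ (Fin d) → EuclideanSpace ℝ (Fin d) :=
    fun z => z - h • gradient f z with hG
  have hdiff : ∀ x, DifferentiableAt ℝ G x := fun x =>
    differentiableAt_fun_id.sub ((hgd x).const_smul h)
  have hfd : ∀ x, fderiv ℝ G x =
      ContinuousLinearMap.id ℝ (EuclideanSpace ℝ (Fin d)) - h • fderiv ℝ (gradient f) x := by
    intro x
    rw [hG]
    rw [fderiv_fun_sub (g := fun z => h • gradient f z) differentiableAt_fun_id ((hgd x).const_smul h), fderiv_id',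
      fderiv_fun_const_smul (hgd x)]
  have hbound : ∀ x, ‖fderiv ℝ G x‖ ≤ 1 - h * μ := by
    intro x
    rw [hfd x]
    refine ContinuousLinearMap.opNorm_le_bound _ (by nlinarith) fun v => ?_
    have hc := contraction_aux (A := fderiv ℝ (gradient f) x)
      (fun u v => symm_fderiv_grad hf x u v) (hsc x) (hLb x) hμ0 hh hhL hμL v
    simpa [ContinuousLinearMap.sub_apply] using hc
  exact Convex.norm_image_sub_le_of_norm_fderiv_le (fun x _ => hdiff x)
    (fun x _ => hbound x) convex_univ (Set.mem_univ b) (Set.mem_univ a)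

lemma flow_step {d : ℕ} {f : EuclideanSpace ℝ (Fin d) → ℝ} {L ℓ h : ℝ} (hf : ContDiff ℝ 2 f)
    (hL : ∀ a, ‖fderiv ℝ (gradient f) a‖ ≤ L) (hL0 : 0 ≤ L)
    (y : ℝ → EuclideanSpace ℝ (Fin d))
    (hflow : ∀ t : ℝ, HasDerivAt y (-gradient f (y t)) t)
    (hℓ : ∀ t : ℝ, 0 ≤ t → ‖gradient f (y t)‖ ≤ ℓ) (hh : 0 < h)
    {s : ℝ} (hs : 0 ≤ s) :
    ‖y (s + h) - y s + h • gradient f (y s)‖ ≤ L * ℓ * (h ^ 2 / 2) := by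
  have hyd : ∀ t ∈ Set.Icc s (s + h),
      HasDerivWithinAt y (-gradient f (y t)) (Set.Icc s (s + h)) t :=
    fun t _ => (hflow t).hasDerivWithinAt
  have hvel : ∀ t ∈ Set.Icc s (s + h), ‖y t - y s‖ ≤ ℓ * (t - s) :=
    norm_image_sub_le_of_norm_deriv_le_segment' hyd (fun t ht => by
      simpa using hℓ t (le_trans hs ht.1))
  set φ : ℝ → EuclideanSpace ℝ (Fin d) :=
    fun t => y t - y s + (t - s) • gradient f (y s) with hφ
  have hφd : ∀ t, HasDerivAt φ (-gradient f (y t) + gradient f (y s)) t := by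
    intro t
    have h1 : HasDerivAt (fun t => y t - y s) (-gradient f (y t)) t := (hflow t).sub_const _
    have h2 : HasDerivAt (fun t : ℝ => (t - s) • gradient f (y s)) (gradient f (y s)) t := by
      simpa using ((hasDerivAt_id t).sub_const s).smul_const (gradient f (y s))
    exact h1.add h2
  have hB : ∀ t : ℝ, HasDerivAt (fun t => L * ℓ * ((t - s) ^ 2 / 2)) (L * ℓ * (t - s)) t := by
    intro t
    have hq : HasDerivAt (fun t : ℝ => (t - s) ^ 2 / 2) (t - s) t := by
      simpa using (((hasDerivAt_id t).sub_const s).pow 2).div_const 2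
    simpa [mul_assoc] using hq.const_mul (L * ℓ)
  have key := image_norm_le_of_norm_deriv_right_le_deriv_boundary
    (f := φ) (f' := fun t => -gradient f (y t) + gradient f (y s)) (a := s) (b := s + h)
    (fun t _ => (hφd t).continuousAt.continuousWithinAt)
    (fun t _ => (hφd t).hasDerivWithinAt)
    (by simp [hφ])
    hB
    (fun t ht => by
      have h1 : ‖-gradient f (y t) + gradient f (y s)‖ =
          ‖gradient f (y t) - gradient f (y s)‖ := by
        rw [← norm_neg]; congr 1; abel
      rw [h1]
      have h3 := hvel t (Set.mem_Icc.mpr ⟨ht.1, le_of_lt ht.2⟩)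
      calc ‖gradient f (y t) - gradient f (y s)‖ ≤ L * ‖y t - y s‖ :=
            grad_lipschitz hf hL (y t) (y s)
        _ ≤ L * (ℓ * (t - s)) := mul_le_mul_of_nonneg_left h3 hL0
        _ = L * ℓ * (t - s) := by ring)
  have hfin := key (Set.right_mem_Icc.mpr (by linarith))
  simpa [hφ, add_sub_cancel_left] using hfin

/-- Dual formulation: for any 0 < h ≤ 1/L, gradient descent started at y₀ shadows
the sampled gradient flow with radius ε = hℓL/(2μ). -/
theorem gradient_descent_shadowing_radius {d : ℕ}
    (f : EuclideanSpace ℝ (Fin d) → ℝ) (L μ ℓ h : ℝ)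
    (hf : ContDiff ℝ 2 f)
    (hsc : ∀ a v, μ * ‖v‖ ^ 2 ≤ inner ℝ v (fderiv ℝ (gradient f) a v))
    (hL : ∀ a, ‖fderiv ℝ (gradient f) a‖ ≤ L)
    (hμ : 0 < μ) (hLpos : 0 < L) (hℓpos : 0 < ℓ)
    (y : ℝ → EuclideanSpace ℝ (Fin d))
    (hflow : ∀ t : ℝ, HasDerivAt y (-gradient f (y t)) t)
    (hℓ : ∀ t : ℝ, 0 ≤ t → ‖gradient f (y t)‖ ≤ ℓ)
    (hh : 0 < h) (hhL : h ≤ 1 / L)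
    (x : ℕ → EuclideanSpace ℝ (Fin d))
    (hx0 : x 0 = y 0)
    (hgd : ∀ k : ℕ, x (k + 1) = x k - h • gradient f (x k)) :
    ∀ k : ℕ, ‖x k - y ((k : ℝ) * h)‖ ≤ h * ℓ * L / (2 * μ) := by
  have hε : 0 < h * ℓ * L / (2 * μ) := by positivity
  rcases Nat.eq_zero_or_pos d with rfl | hd
  · intro k
    have hz : x k - y ((k : ℝ) * h) = 0 := Subsingleton.elim _ _
    rw [hz, norm_zero]
    exact le_of_lt hε
  · -- derive μ ≤ L
    have hμL : μ ≤ L := by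
      set v : EuclideanSpace ℝ (Fin d) := EuclideanSpace.single (⟨0, hd⟩ : Fin d) (1 : ℝ) with hv
      have hnv : ‖v‖ = 1 := by simp [hv]
      have h1 := hsc 0 v
      have h2 : (inner ℝ v (fderiv ℝ (gradient f) 0 v) : ℝ) ≤ L := by
        calc (inner ℝ v (fderiv ℝ (gradient f) 0 v) : ℝ)
            ≤ ‖v‖ * ‖fderiv ℝ (gradient f) 0 v‖ := real_inner_le_norm _ _
          _ ≤ ‖v‖ * (‖fderiv ℝ (gradient f) 0‖ * ‖v‖) := by
              exact mul_le_mul_of_nonneg_left ((fderiv ℝ (gradient f) 0).le_opNorm v)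
                (norm_nonneg v)
          _ ≤ L := by rw [hnv, one_mul, mul_one]; exact hL 0
      rw [hnv] at h1
      simpa using h1.trans h2
    have hhL1 : h * L ≤ 1 := by
      rw [le_div_iff₀ hLpos] at hhL; exact hhL
    have hhμ1 : h * μ ≤ 1 := le_trans (by nlinarith) hhL1
    set ε : ℝ := h * ℓ * L / (2 * μ) with hεdef
    have hstep : L * ℓ * (h ^ 2 / 2) = (h * μ) * ε := by
      rw [hεdef]; field_simp
    intro k
    induction k with
    | zero => simp [hx0]; exact le_of_lt hε
    | succ k ih =>
      set s : ℝ := (k : ℝ) * h with hs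
      have hs0 : 0 ≤ s := by positivity
      have hcast : ((k + 1 : ℕ) : ℝ) * h = s + h := by push_cast; ring
      rw [hgd k, hcast]
      have hdecomp : x k - h • gradient f (x k) - y (s + h) =
          ((x k - h • gradient f (x k)) - (y s - h • gradient f (y s)))
            - (y (s + h) - y s + h • gradient f (y s)) := by abel
      rw [hdecomp]
      calc ‖((x k - h • gradient f (x k)) - (y s - h • gradient f (y s)))
            - (y (s + h) - y s + h • gradient f (y s))‖
          ≤ ‖(x k - h • gradient f (x k)) - (y s - h • gradient f (y s))‖
            + ‖y (s + h) - y s + h • gradient f (y s)‖ := norm_sub_le _ _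
        _ ≤ (1 - h * μ) * ‖x k - y s‖ + L * ℓ * (h ^ 2 / 2) := by
            gcongr
            · exact gd_contract hf hsc hL hμ hh hhL1 hμL (x k) (y s)
            · exact flow_step hf hL (le_of_lt hLpos) y hflow hℓ hh hs0
        _ ≤ (1 - h * μ) * ε + (h * μ) * ε := by
            rw [← hstep]
            exact add_le_add (mul_le_mul_of_nonneg_left ih (by nlinarith)) le_rfl
        _ = ε := by ring
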